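/- For all real numbers x > 0 and x₀ > 0, setting ξ = x₀/(1 + x₀) and ψ = log(1 + x₀) − (x₀/(1 + x₀))·log(x₀), the inequality ξ·log(x) + ψ ≤ log(1 + x) holds, with equality when x = x₀. -/

import Mathlib

open Real

/-- The SCALE inequality: for `x, x₀ > 0`, with `ξ = x₀/(1+x₀)` and
`ψ = log(1+x₀) - ξ·log(x₀)`, we have `ξ·log x + ψ ≤ log(1+x)`, with equality
when `x = x₀`. -/
theorem scale_inequality
    (x x₀ : ℝ) (hx : 0 < x) (hx₀ : 0 < x₀) :
    (x₀ / (1 + x₀)) * Real.log x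
        + (Real.log (1 + x₀) - (x₀ / (1 + x₀)) * Real.log x₀)
      ≤ Real.log (1 + x)
    ∧ (x = x₀ →
        (x₀ / (1 + x₀)) * Real.log x
            + (Real.log (1 + x₀) - (x₀ / (1 + x₀)) * Real.log x₀)
          = Real.log (1 + x)) := by
  constructor
  · have h1 : (0:ℝ) < 1 + x₀ := by linarith
    set ξ : ℝ := x₀ / (1 + x₀) with hξ
    have ht : (0:ℝ) < x / x₀ := div_pos hx hx₀
    -- weighted AM-GM: 1^(1-ξ) * (x/x₀)^ξ ≤ (1-ξ)*1 + ξ*(x/x₀)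
    have hw₁ : (0:ℝ) ≤ 1 / (1 + x₀) := by positivity
    have hw₂ : (0:ℝ) ≤ ξ := by positivity
    have hsum : 1 / (1 + x₀) + ξ = 1 := by
      rw [hξ]; field_simp
    have key : (x / x₀) ^ ξ ≤ (1 + x) / (1 + x₀) := by
      have : (1:ℝ) ^ (1 / (1 + x₀)) * (x / x₀) ^ ξ
          ≤ 1 / (1 + x₀) * 1 + ξ * (x / x₀) :=
        Real.geom_mean_le_arith_mean2_weighted hw₁ hw₂ (by norm_num) ht.le hsum
      rw [Real.one_rpow, one_mul] at this
      calc (x / x₀) ^ ξ ≤ 1 / (1 + x₀) * 1 + ξ * (x / x₀) := this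
        _ = (1 + x) / (1 + x₀) := by
            rw [hξ]; field_simp
    have hlog := Real.log_le_log (by positivity) key
    rw [Real.log_rpow ht, Real.log_div (by positivity) (ne_of_gt h1),
        Real.log_div (ne_of_gt hx) (ne_of_gt hx₀)] at hlog
    nlinarith [hlog]
  · rintro rfl; ring
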